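/- Let G be a finite connected bipartite graph with parts B and R, and let α: B → ℤ satisfy α(v) ∈ {2·deg(v)−1, 2·deg(v), 2·deg(v)+1} for all v ∈ B. Let R' ⊆ R be such that |R'| + Σ_{v ∈ B} α(v) is even. Then there exists an edge-weighting ω: E(G) → {1,2,3} such that s_ω(v) is even for all v ∈ R∖R', s_ω(v) is odd for all v ∈ R', and s_ω(v) = α(v) for all v ∈ B. -/

import Mathlib

open Finset

/-- The weighted degree of `v`. -/
def wdeg {V : Type*} [Fintype V] [DecidableEq V] (G : SimpleGraph V) [DecidableRel G.Adj]
    (ω : V → V → ℕ) (v : V) : ℕ :=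
  ∑ u ∈ G.neighborFinset v, ω v u

section Aux

variable {V : Type*} [Fintype V] [DecidableEq V] (G : SimpleGraph V) [DecidableRel G.Adj]

/-- parity degree of a ZMod-2 edge set. -/
private def Psum (h : V → V → ZMod 2) (v : V) : ZMod 2 :=
  ∑ u ∈ G.neighborFinset v, h v u

private lemma toggle_parity {a c : V} (hac : G.Adj a c) (h : V → V → ZMod 2) (v : V) :
    Psum G (fun x y => h x y + (if (x = a ∧ y = c) ∨ (x = c ∧ y = a) then 1 else 0)) v
      = Psum G h v + ((if v = a then 1 else 0) + (if v = c then 1 else 0)) := by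
  have hne : a ≠ c := hac.ne
  unfold Psum
  rw [Finset.sum_add_distrib]
  congr 1
  by_cases hva : v = a <;> by_cases hvc : v = c
  · exact absurd (hva.symm.trans hvc) hne
  · subst hva
    simp [hne, Finset.sum_ite_eq', SimpleGraph.mem_neighborFinset, hac]
  · subst hvc
    simp [hne, Ne.symm hne, Finset.sum_ite_eq', SimpleGraph.mem_neighborFinset, hac.symm]
  · simp [hva, hvc]

private lemma walk_parity {a b : V} (w : G.Walk a b) :
    ∃ h : V → V → ZMod 2, (∀ x y, h x y = h y x) ∧ (∀ x y, ¬G.Adj x y → h x y = 0) ∧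
      ∀ v, Psum G h v = (if v = a then 1 else 0) + (if v = b then 1 else 0) := by
  induction w with
  | nil =>
    refine ⟨fun _ _ => 0, fun _ _ => rfl, fun _ _ _ => rfl, fun v => ?_⟩
    unfold Psum
    rw [Finset.sum_const_zero]
    split_ifs <;> decide
  | @cons x y z hadj p ih =>
    obtain ⟨h, hs, hz, hp⟩ := ih
    refine ⟨fun u w => h u w + (if (u = x ∧ w = y) ∨ (u = y ∧ w = x) then 1 else 0),
      ?_, ?_, ?_⟩
    · intro u w
      show h u w + (if (u = x ∧ w = y) ∨ (u = y ∧ w = x) then 1 else 0)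
         = h w u + (if (w = x ∧ u = y) ∨ (w = y ∧ u = x) then 1 else 0)
      have hiff : ((u = x ∧ w = y) ∨ (u = y ∧ w = x)) ↔
          ((w = x ∧ u = y) ∨ (w = y ∧ u = x)) := by
        constructor <;> (rintro (⟨rfl, rfl⟩ | ⟨rfl, rfl⟩) <;> simp)
      rw [hs, if_congr hiff rfl rfl]
    · intro u w hnadj
      have hcond : ¬((u = x ∧ w = y) ∨ (u = y ∧ w = x)) := by
        rintro (⟨rfl, rfl⟩ | ⟨rfl, rfl⟩)
        · exact hnadj hadj
        · exact hnadj hadj.symm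
      show h u w + (if (u = x ∧ w = y) ∨ (u = y ∧ w = x) then 1 else 0) = 0
      rw [hz _ _ hnadj]
      simp [hcond]
    · intro v
      rw [toggle_parity G hadj h v, hp v]
      split_ifs <;> decide

private lemma set_parity (hG : G.Connected) :
    ∀ T : Finset V, Even T.card →
    ∃ h : V → V → ZMod 2, (∀ x y, h x y = h y x) ∧ (∀ x y, ¬G.Adj x y → h x y = 0) ∧
      ∀ v, Psum G h v = (if v ∈ T then 1 else 0) := by
  intro T
  induction T using Finset.strongInduction with
  | _ T ih =>
    intro hT
    rcases T.eq_empty_or_nonempty with rfl | ⟨a, ha⟩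
    · refine ⟨fun _ _ => 0, fun _ _ => rfl, fun _ _ _ => rfl, fun v => ?_⟩
      unfold Psum
      simp
    · have hpos : 0 < T.card := Finset.card_pos.mpr ⟨a, ha⟩
      have h2 : 2 ≤ T.card := by
        rcases hT with ⟨k, hk⟩; omega
      have hne : (T.erase a).Nonempty := by
        rw [← Finset.card_pos, Finset.card_erase_of_mem ha]; omega
      obtain ⟨b, hb⟩ := hne
      have hba : b ≠ a := Finset.ne_of_mem_erase hb
      have hbT : b ∈ T := Finset.mem_of_mem_erase hb
      set T' := (T.erase a).erase b with hT'
      have hsub : T' ⊂ T := by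
        refine Finset.ssubset_iff_of_subset (fun x hx => ?_) |>.mpr ⟨a, ha, ?_⟩
        · exact Finset.mem_of_mem_erase (Finset.mem_of_mem_erase hx)
        · simp [hT', hba]
      have hcard' : T'.card = T.card - 2 := by
        rw [hT', Finset.card_erase_of_mem hb, Finset.card_erase_of_mem ha]
        omega
      have hT'even : Even T'.card := by
        rcases hT with ⟨k, hk⟩
        exact ⟨k - 1, by omega⟩
      obtain ⟨h2f, hs2, hz2, hp2⟩ := ih T' hsub hT'even
      obtain ⟨w⟩ := hG.preconnected a b
      obtain ⟨h1f, hs1, hz1, hp1⟩ := walk_parity G w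
      refine ⟨fun x y => h1f x y + h2f x y,
        fun x y => by show h1f x y + h2f x y = h1f y x + h2f y x; rw [hs1, hs2],
        fun x y hn => by
          show h1f x y + h2f x y = 0
          rw [hz1 _ _ hn, hz2 _ _ hn, add_zero], fun v => ?_⟩
      have hadd : Psum G (fun x y => h1f x y + h2f x y) v = Psum G h1f v + Psum G h2f v := by
        unfold Psum; simp [Finset.sum_add_distrib]
      rw [hadd, hp1, hp2]
      have haT' : a ∉ T' := by simp [hT']
      have hbT' : b ∉ T' := by simp [hT']
      have hmem : ∀ x, x ∈ T ↔ x = a ∨ x = b ∨ x ∈ T' := by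
        intro x
        simp only [hT', Finset.mem_erase]
        constructor
        · intro hx
          by_cases h1 : x = a
          · exact Or.inl h1
          by_cases h2 : x = b
          · exact Or.inr (Or.inl h2)
          · exact Or.inr (Or.inr ⟨h2, h1, hx⟩)
        · rintro (rfl | rfl | ⟨_, _, hx⟩) <;> [exact ha; exact hbT; exact hx]
      by_cases h1 : v = a
      · subst h1
        simp [ha, haT', (Ne.symm hba : v ≠ b)]
      · by_cases h2 : v = b
        · subst h2
          simp [hbT, hbT', h1]
        · by_cases h3 : v ∈ T'
          · have hvT : v ∈ T := hsub.subset h3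
            simp [h1, h2, h3, hvT]
          · have hvT : v ∉ T := fun hvT => by
              rcases (hmem v).mp hvT with rfl | rfl | hx
              · exact h1 rfl
              · exact h2 rfl
              · exact h3 hx
            simp [h1, h2, h3, hvT]

private lemma zmod2_cases : ∀ x : ZMod 2, x = 0 ∨ x = 1 := by decide

private lemma even_iff_zmod (n : ℕ) : Even n ↔ ((n : ZMod 2) = 0) := by
  rw [ZMod.natCast_eq_zero_iff]
  exact ⟨fun ⟨k,hk⟩ => ⟨k, by omega⟩, fun ⟨k,hk⟩ => ⟨k, by omega⟩⟩

private lemma odd_iff_zmod (n : ℕ) : Odd n ↔ ((n : ZMod 2) = 1) := by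
  rw [← Nat.not_even_iff_odd, even_iff_zmod]
  have := zmod2_cases (n : ZMod 2)
  constructor
  · intro hne; rcases this with h | h; exact absurd h hne; exact h
  · intro h1 h0; rw [h1] at h0; exact one_ne_zero h0

private lemma intcast_zmod_two (a : ℤ) : ((a : ZMod 2)) = if a % 2 = 1 then 1 else 0 := by
  have key : ((a : ZMod 2)) = ((a % 2 : ℤ) : ZMod 2) := by
    rw [ZMod.intCast_eq_intCast_iff]
    unfold Int.ModEq
    omega
  rcases Int.emod_two_eq a with h | h <;> rw [key, h] <;> simp

private lemma cast_ite_zmod (c : Prop) [Decidable c] (x : ZMod 2) :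
    ((if x = 0 then 2 else if c then 3 else 1 : ℕ) : ZMod 2) = x := by
  rcases zmod2_cases x with h | h <;> subst h
  · rw [if_pos rfl]; decide
  · rw [if_neg (by decide)]; split_ifs <;> decide

end Aux

theorem stmt4 {V : Type*} [Fintype V] [DecidableEq V] (G : SimpleGraph V) [DecidableRel G.Adj]
    (hG : G.Connected) (B R : Finset V)
    (hpart : ∀ v : V, (v ∈ B ∧ v ∉ R) ∨ (v ∈ R ∧ v ∉ B))
    (hbip : ∀ a b : V, G.Adj a b → ((a ∈ B ∧ b ∈ R) ∨ (a ∈ R ∧ b ∈ B)))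
    (α : V → ℤ)
    (hα : ∀ v ∈ B, α v ∈
      ({2 * (G.degree v : ℤ) - 1, 2 * (G.degree v : ℤ), 2 * (G.degree v : ℤ) + 1} : Set ℤ))
    (R' : Finset V) (hR' : R' ⊆ R)
    (hparity : Even ((R'.card : ℤ) + ∑ v ∈ B, α v)) :
    ∃ ω : V → V → ℕ,
      (∀ a b, ω a b = ω b a) ∧
      (∀ a b, G.Adj a b → ω a b ∈ ({1, 2, 3} : Set ℕ)) ∧
      (∀ v ∈ R \ R', Even (wdeg G ω v)) ∧
      (∀ v ∈ R', Odd (wdeg G ω v)) ∧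
      (∀ v ∈ B, (wdeg G ω v : ℤ) = α v) := by
  classical
  have hRB : ∀ v ∈ R, v ∉ B := fun v hv =>
    (hpart v).elim (fun h => absurd hv h.2) (fun h => h.2)
  set T : Finset V := R' ∪ B.filter (fun v => α v % 2 = 1) with hTdef
  have hdisj : Disjoint R' (B.filter (fun v => α v % 2 = 1)) := by
    rw [Finset.disjoint_left]
    intro a haR' haB
    exact hRB a (hR' haR') (Finset.mem_filter.mp haB).1
  have e1 : ∑ v ∈ B, α v % 2 = ((B.filter (fun v => α v % 2 = 1)).card : ℤ) := by
    rw [Finset.card_filter]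
    push_cast
    refine Finset.sum_congr rfl fun v _ => ?_
    rcases Int.emod_two_eq (α v) with h | h <;> simp [h]
  have hsummod : (∑ v ∈ B, α v) % 2 = ((B.filter (fun v => α v % 2 = 1)).card : ℤ) % 2 := by
    rw [Finset.sum_int_mod, e1]
  have hTcard : Even T.card := by
    rw [hTdef, Finset.card_union_of_disjoint hdisj]
    rcases hparity with ⟨k, hk⟩
    rw [Nat.even_iff]
    omega
  obtain ⟨h, hsym, hsupp, hP⟩ := set_parity G hG T hTcard
  set F : V → Finset V := fun v => (G.neighborFinset v).filter (fun u => h v u = 1) with hFdef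
  have hPF : ∀ v, Psum G h v = ((F v).card : ZMod 2) := by
    intro v
    unfold Psum
    rw [hFdef, Finset.card_filter]
    push_cast
    refine Finset.sum_congr rfl fun u _ => ?_
    rcases zmod2_cases (h v u) with h0 | h0 <;> rw [h0] <;> simp
  have hchoice : ∀ v ∈ B, ∃ s : Finset V, s ⊆ F v ∧
      2 * (s.card : ℤ) = ((F v).card : ℤ) + (α v - 2 * (G.degree v : ℤ)) := by
    intro v hv
    have hδ := hα v hv
    simp only [Set.mem_insert_iff, Set.mem_singleton_iff] at hδ
    have hvR' : v ∉ R' := fun hr => hRB v (hR' hr) hv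
    have hvT : (v ∈ T) ↔ (α v % 2 = 1) := by
      rw [hTdef]
      simp [Finset.mem_union, Finset.mem_filter, hv, hvR']
    have hcast : ((F v).card : ZMod 2) = ((α v : ℤ) : ZMod 2) := by
      rw [← hPF v, hP v, intcast_zmod_two]
      by_cases hm : α v % 2 = 1
      · rw [if_pos hm, if_pos (hvT.mpr hm)]
      · rw [if_neg hm, if_neg (fun hT => hm (hvT.mp hT))]
    have hdvd0 : ((((F v).card : ℤ) - α v : ℤ) : ZMod 2) = 0 := by
      push_cast
      rw [hcast]
      ring
    obtain ⟨k, hk0⟩ := (ZMod.intCast_zmod_eq_zero_iff_dvd _ 2).mp hdvd0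
    have hk : ((F v).card : ℤ) - α v = 2 * k := by exact_mod_cast hk0
    have hbound : ∃ m : ℕ, (m:ℤ) ≤ ((F v).card : ℤ) ∧
        2*(m:ℤ) = ((F v).card : ℤ) + (α v - 2*(G.degree v : ℤ)) := by
      refine ⟨(((F v).card : ℤ) + (α v - 2*(G.degree v : ℤ))).toNat / 2, ?_, ?_⟩ <;>
        rcases hδ with hd | hd | hd <;> omega
    obtain ⟨m, hm1, hm2⟩ := hbound
    have hm1' : m ≤ (F v).card := by exact_mod_cast hm1
    obtain ⟨s, hs1, hs2⟩ := Finset.exists_subset_card_eq hm1'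
    exact ⟨s, hs1, by rw [hs2]; exact hm2⟩
  choose S hS1 hS2 using hchoice
  set ω : V → V → ℕ := fun a b =>
    if G.Adj a b then
      (if hab : a ∈ B then (if h a b = 0 then 2 else if b ∈ S a hab then 3 else 1)
       else if hbb : b ∈ B then (if h b a = 0 then 2 else if a ∈ S b hbb then 3 else 1)
       else 2)
    else 2 with hω
  refine ⟨ω, ?_, ?_, ?_, ?_, ?_⟩
  · -- symmetry
    intro a b
    by_cases hab : G.Adj a b
    · have hba := hab.symm
      rcases hbip a b hab with ⟨haB, hbR⟩ | ⟨haR, hbB⟩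
      · have hbB : b ∉ B := hRB b hbR
        simp only [hω, if_pos hab, if_pos hba, dif_pos haB, dif_neg hbB]
      · have haB : a ∉ B := hRB a haR
        simp only [hω, if_pos hab, if_pos hba, dif_pos hbB, dif_neg haB]
    · have hba : ¬ G.Adj b a := fun hc => hab hc.symm
      simp only [hω, if_neg hab, if_neg hba]
  · -- values
    intro a b hab
    simp only [hω, if_pos hab, Set.mem_insert_iff, Set.mem_singleton_iff]
    split_ifs <;> norm_num
  · -- even on R \ R'
    intro v hv
    rw [Finset.mem_sdiff] at hv
    have hvB : v ∉ B := hRB v hv.1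
    have hvT : v ∉ T := by
      rw [hTdef, Finset.mem_union]
      rintro (h1 | h1)
      · exact hv.2 h1
      · exact hvB (Finset.mem_filter.mp h1).1
    have hkey : ((wdeg G ω v : ZMod 2)) = Psum G h v := by
      unfold wdeg Psum
      push_cast
      refine Finset.sum_congr rfl fun u hu => ?_
      have hadj : G.Adj v u := (SimpleGraph.mem_neighborFinset _ _ _).mp hu
      have huB : u ∈ B := by
        rcases hbip v u hadj with ⟨h1, _⟩ | ⟨_, h2⟩
        · exact absurd h1 hvB
        · exact h2
      simp only [hω, if_pos hadj, dif_neg hvB, dif_pos huB]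
      rw [hsym v u]
      exact cast_ite_zmod _ _
    rw [even_iff_zmod, hkey, hP v, if_neg hvT]
  · -- odd on R'
    intro v hv
    have hvR : v ∈ R := hR' hv
    have hvB : v ∉ B := hRB v hvR
    have hvT : v ∈ T := by rw [hTdef]; exact Finset.mem_union_left _ hv
    have hkey : ((wdeg G ω v : ZMod 2)) = Psum G h v := by
      unfold wdeg Psum
      push_cast
      refine Finset.sum_congr rfl fun u hu => ?_
      have hadj : G.Adj v u := (SimpleGraph.mem_neighborFinset _ _ _).mp hu
      have huB : u ∈ B := by
        rcases hbip v u hadj with ⟨h1, _⟩ | ⟨_, h2⟩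
        · exact absurd h1 hvB
        · exact h2
      simp only [hω, if_pos hadj, dif_neg hvB, dif_pos huB]
      rw [hsym v u]
      exact cast_ite_zmod _ _
    rw [odd_iff_zmod, hkey, hP v, if_pos hvT]
  · -- exact value on B
    intro v hvB
    unfold wdeg
    push_cast
    have hstep : ∀ u ∈ G.neighborFinset v, ((ω v u : ℤ))
        = 2 + (if h v u = 0 then 0 else if u ∈ S v hvB then 1 else -1) := by
      intro u hu
      have hadj : G.Adj v u := (SimpleGraph.mem_neighborFinset _ _ _).mp hu
      simp only [hω, if_pos hadj, dif_pos hvB]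
      split_ifs <;> norm_num
    rw [Finset.sum_congr rfl hstep, Finset.sum_add_distrib, Finset.sum_const,
      SimpleGraph.card_neighborFinset_eq_degree, nsmul_eq_mul]
    have hcompl : ∀ u ∈ G.neighborFinset v,
        (if h v u = 0 then (0:ℤ) else if u ∈ S v hvB then 1 else -1)
        = (if h v u = 1 then (if u ∈ S v hvB then (1:ℤ) else -1) else 0) := by
      intro u _
      rcases zmod2_cases (h v u) with h0 | h0 <;> rw [h0] <;> simp
    have hε : ∑ u ∈ G.neighborFinset v,
        (if h v u = 0 then (0:ℤ) else if u ∈ S v hvB then 1 else -1)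
        = 2 * ((S v hvB).card : ℤ) - ((F v).card : ℤ) := by
      rw [Finset.sum_congr rfl hcompl, ← Finset.sum_filter]
      rw [show Finset.filter (fun u => h v u = 1) (G.neighborFinset v) = F v from rfl]
      have hterm : ∀ u ∈ F v, (if u ∈ S v hvB then (1:ℤ) else -1)
          = 2 * (if u ∈ S v hvB then (1:ℤ) else 0) - 1 := by
        intro u _
        split_ifs <;> ring
      rw [Finset.sum_congr rfl hterm, Finset.sum_sub_distrib, ← Finset.mul_sum,
        Finset.sum_boole, Finset.sum_const, Finset.filter_mem_eq_inter,
        Finset.inter_eq_right.mpr (hS1 v hvB)]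
      push_cast
      ring
    rw [hε]
    have := hS2 v hvB
    linarith
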